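/- Let K be a field of characteristic zero, let A, B, p, q ∈ K be nonzero with p ≠ q, and define the Ward–Horadam sequence H by H_n = A·p^n + B·q^n. Assume H_n ≠ 0 for all n ≥ 1. Fix integers r, s ≥ 1 and elements h₁, h₂ ∈ K. Then H_{r+s} = h₁·H_r + h₂·H_s holds if and only if the H-binomial recurrence C_H(r+s, r) = h₁·C_H(r+s−1, r−1) + h₂·C_H(r+s−1, r) holds. -/

import Mathlib

/-- The `F`-factorial: `ffact F 0 = 1`, `ffact F n = F n * F (n-1) * ... * F 1`. -/
def ffact {K : Type*} [Field K] (F : ℕ → K) : ℕ → K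
  | 0 => 1
  | n + 1 => F (n + 1) * ffact F n

/-- The `F`-binomial coefficient `C_F(n, k) = F_n! / (F_k! * F_{n-k}!)`. -/
def fbinom {K : Type*} [Field K] (F : ℕ → K) (n k : ℕ) : K :=
  ffact F n / (ffact F k * ffact F (n - k))

lemma ffact_ne_zero {K : Type*} [Field K] (H : ℕ → K)
    (hHne : ∀ n, 1 ≤ n → H n ≠ 0) : ∀ n, ffact H n ≠ 0
  | 0 => one_ne_zero
  | n + 1 => mul_ne_zero (hHne _ (Nat.succ_le_succ (Nat.zero_le n)))
      (ffact_ne_zero H hHne n)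

theorem stmt1 {K : Type*} [Field K] [CharZero K] (A B p q : K)
    (hA : A ≠ 0) (hB : B ≠ 0) (hp : p ≠ 0) (hq : q ≠ 0) (hpq : p ≠ q)
    (H : ℕ → K) (hH : ∀ n, H n = A * p ^ n + B * q ^ n)
    (hHne : ∀ n, 1 ≤ n → H n ≠ 0) (r s : ℕ) (hr : 1 ≤ r) (hs : 1 ≤ s)
    (h₁ h₂ : K) :
    H (r + s) = h₁ * H r + h₂ * H s ↔
      fbinom H (r + s) r =
        h₁ * fbinom H (r + s - 1) (r - 1) + h₂ * fbinom H (r + s - 1) r := by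
  obtain ⟨a, rfl⟩ : ∃ a, r = a + 1 := ⟨r - 1, (Nat.succ_pred_eq_of_pos hr).symm⟩
  obtain ⟨b, rfl⟩ : ∃ b, s = b + 1 := ⟨s - 1, (Nat.succ_pred_eq_of_pos hs).symm⟩
  have hfa := ffact_ne_zero H hHne a
  have hfb := ffact_ne_zero H hHne b
  have hfab := ffact_ne_zero H hHne (a + b + 1)
  have hHa : H (a + 1) ≠ 0 := hHne _ (Nat.succ_le_succ (Nat.zero_le a))
  have hHb : H (b + 1) ≠ 0 := hHne _ (Nat.succ_le_succ (Nat.zero_le b))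
  have e1 : a + 1 + (b + 1) = (a + b + 1) + 1 := by ring
  have e2 : a + 1 + (b + 1) - 1 = a + b + 1 := by omega
  have e3 : a + 1 - 1 = a := by omega
  have e4 : (a + b + 1) + 1 - (a + 1) = b + 1 := by omega
  have e5 : a + b + 1 - a = b + 1 := by omega
  have e6 : a + b + 1 - (a + 1) = b := by omega
  rw [e1]
  simp only [fbinom, show (a + b + 1) + 1 - 1 = a + b + 1 from by omega, e3, e4, e5, e6]
  rw [show ffact H ((a + b + 1) + 1) = H ((a + b + 1) + 1) * ffact H (a + b + 1) from rfl,
    show ffact H (a + 1) = H (a + 1) * ffact H a from rfl,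
    show ffact H (b + 1) = H (b + 1) * ffact H b from rfl]
  set X := H ((a + b + 1) + 1) with hX
  set F := ffact H (a + b + 1) with hF
  have hd : H (a + 1) * ffact H a * (H (b + 1) * ffact H b) ≠ 0 :=
    mul_ne_zero (mul_ne_zero hHa hfa) (mul_ne_zero hHb hfb)
  have R : h₁ * (F / (ffact H a * (H (b + 1) * ffact H b))) +
      h₂ * (F / (H (a + 1) * ffact H a * ffact H b)) =
      (h₁ * H (a + 1) + h₂ * H (b + 1)) * F /
        (H (a + 1) * ffact H a * (H (b + 1) * ffact H b)) := by
    field_simp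
  rw [R, div_eq_div_iff hd hd]
  constructor
  · intro h
    linear_combination (F * (H (a + 1) * ffact H a * (H (b + 1) * ffact H b))) * h
  · intro h
    have key : (X - (h₁ * H (a + 1) + h₂ * H (b + 1))) *
        (F * (H (a + 1) * ffact H a * (H (b + 1) * ffact H b))) = 0 := by
      linear_combination h
    rcases mul_eq_zero.mp key with h0 | h0
    · exact sub_eq_zero.mp h0
    · exact absurd h0 (mul_ne_zero hfab hd)
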